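/- Let 0 ≤ m_n ≤ ⋯ ≤ m_1 be a weakly decreasing sequence of nonnegative integers and let (l_1, …, l_j) record the multiplicities of the distinct values (so l_1 is the number of occurrences of m_n, etc., and n = l_1 + ⋯ + l_j). With c_{m_n,…,m_1}(q) defined by the recursion c_{m_k,…,m_1}(q) = q^{k(k-1)m_k} ∑_{i=0}^{k-1} (-1)^{k+i+1} [k choose i]_q q^{(k-i)(k-1) - i(i-1)m_k} c_{m_i,…,m_1}(q) δ_{m_{i+1},m_k}, c_{m_1}(q) = 1, one has the closed form c_{m_n,…,m_1}(q) = ([n]!/([l_1]!⋯[l_j]!)) · q^{∑_{i=1}^{n} 2(i−1)m_i + (n(n−1) − ∑_{i=1}^{j} l_i(l_i−1))/2}. In particular c_{m_n,…,m_1}(q) ∈ ℤ[q,q^{−1}]. -/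

import Mathlib

open Finset

noncomputable def qq : RatFunc ℂ := RatFunc.X

noncomputable def qint (m : ℕ) : RatFunc ℂ := (qq ^ m - qq⁻¹ ^ m) / (qq - qq⁻¹)

noncomputable def qfact : ℕ → RatFunc ℂ
  | 0 => 1
  | n + 1 => qint (n + 1) * qfact n

noncomputable def qbinom (n r : ℕ) : RatFunc ℂ :=
  if r ≤ n then qfact n / (qfact (n - r) * qfact r) else 0

lemma qq_ne_zero : qq ≠ 0 := RatFunc.X_ne_zero

lemma qq_pow_ne_one {k : ℕ} (hk : 0 < k) : qq ^ k ≠ 1 := by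
  have : (algebraMap (Polynomial ℂ) (RatFunc ℂ)) (Polynomial.X ^ k) ≠
      (algebraMap (Polynomial ℂ) (RatFunc ℂ)) 1 := by
    intro h
    have := IsFractionRing.injective (Polynomial ℂ) (RatFunc ℂ) h
    have h1 := congrArg Polynomial.natDegree this
    rw [Polynomial.natDegree_X_pow, Polynomial.natDegree_one] at h1
    omega
  rw [map_pow, map_one] at this
  exact this

lemma qsub_ne_zero : qq - qq⁻¹ ≠ 0 := by
  intro h
  have h2 : qq * qq = 1 := by
    have := sub_eq_zero.mp h
    field_simp [qq_ne_zero] at this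
    linear_combination this
  have := qq_pow_ne_one (k := 2) (by norm_num)
  rw [pow_two] at this; exact this h2

lemma qint_ne_zero {k : ℕ} (hk : 0 < k) : qint k ≠ 0 := by
  unfold qint
  apply div_ne_zero _ qsub_ne_zero
  intro h
  have h2 : qq ^ k * qq ^ k = 1 := by
    have := sub_eq_zero.mp h
    nth_rewrite 2 [this]
    rw [← mul_pow, mul_inv_cancel₀ qq_ne_zero, one_pow]
  rw [← pow_add] at h2
  exact qq_pow_ne_one (by omega) h2

lemma qfact_ne_zero (n : ℕ) : qfact n ≠ 0 := by
  induction n with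
  | zero => simp [qfact]
  | succ n ih => exact mul_ne_zero (qint_ne_zero (by omega)) ih

lemma qq_pow_mul_inv_pow (x y : ℕ) : qq ^ (x + y) * qq⁻¹ ^ y = qq ^ x := by
  rw [pow_add, mul_assoc, ← mul_pow, mul_inv_cancel₀ qq_ne_zero, one_pow, mul_one]

lemma qint_split (a b : ℕ) : qint (a + b) = qq ^ b * qint a + qq⁻¹ ^ a * qint b := by
  unfold qint
  have key : qq^(a+b) - qq⁻¹^(a+b) = qq^b*(qq^a - qq⁻¹^a) + qq⁻¹^a*(qq^b - qq⁻¹^b) := by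
    rw [pow_add, pow_add]; ring
  rw [key, add_div, mul_div_assoc, mul_div_assoc]

lemma qbinom_zero (n : ℕ) : qbinom n 0 = 1 := by
  simp only [qbinom, if_pos (Nat.zero_le n), Nat.sub_zero]
  rw [show qfact 0 = 1 from rfl, mul_one, div_self (qfact_ne_zero n)]

lemma qbinom_self (n : ℕ) : qbinom n n = 1 := by
  simp only [qbinom, if_pos (le_refl n), Nat.sub_self]
  rw [show qfact 0 = 1 from rfl, one_mul, div_self (qfact_ne_zero n)]

lemma qbinom_of_gt {n r : ℕ} (h : n < r) : qbinom n r = 0 := by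
  simp [qbinom, Nat.not_le.mpr h]

lemma qbinom_eq {n r : ℕ} (h : r ≤ n) : qbinom n r = qfact n / (qfact (n-r) * qfact r) := by
  simp [qbinom, h]

lemma qpascal (l i : ℕ) (h : i ≤ l) :
    qbinom (l+1) (i+1) = qq ^ (l - i) * qbinom l i + qq⁻¹ ^ (i+1) * qbinom l (i+1) := by
  rcases eq_or_lt_of_le h with rfl | h
  · rw [qbinom_self, qbinom_self, qbinom_of_gt (by omega)]
    simp
  · -- i + 1 ≤ l
    have h1 : i + 1 ≤ l := h
    rw [qbinom_eq (by omega), qbinom_eq (by omega), qbinom_eq (by omega)]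
    have hfs : qfact (l+1) = qint (l+1) * qfact l := rfl
    have hsplit : qint (l + 1) = qq ^ (l - i) * qint (i+1) + qq⁻¹ ^ (i+1) * qint (l - i) := by
      have := qint_split (i+1) (l-i)
      rw [show i + 1 + (l - i) = l + 1 by omega] at this
      exact this
    have e1 : l + 1 - (i + 1) = l - i := by omega
    have e2 : qfact (l - i + 1) = qint (l - i + 1) * qfact (l - i) := rfl
    have e3 : l - (i+1) + 1 = l - i := by omega
    have e4 : qfact (l - i) = qint (l - i) * qfact (l - (i+1)) := by
      rw [← e3]; rfl
    have e5 : qfact (i + 1) = qint (i+1) * qfact i := rfl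
    have n1 := qfact_ne_zero (l - (i+1))
    have n2 := qfact_ne_zero i
    have n3 := qfact_ne_zero l
    have n4 := qint_ne_zero (show 0 < l - i by omega)
    have n5 := qint_ne_zero (show 0 < i + 1 by omega)
    rw [e1, e4, e5, ← mul_div_assoc, ← mul_div_assoc,
      div_add_div _ _ (by exact mul_ne_zero (mul_ne_zero n4 n1) n2)
        (by exact mul_ne_zero n1 (mul_ne_zero n5 n2)),
      div_eq_div_iff (by exact mul_ne_zero (mul_ne_zero n4 n1) (mul_ne_zero n5 n2))
        (by exact mul_ne_zero (mul_ne_zero (mul_ne_zero n4 n1) n2) (mul_ne_zero n1 (mul_ne_zero n5 n2)))]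
    rw [hfs, hsplit]
    ring

lemma qSsum (l : ℕ) (hl : 1 ≤ l) :
    ∑ r ∈ range (l + 1), (-1 : RatFunc ℂ) ^ r * qq ^ (r * (l - 1)) * qbinom l r = 0 := by
  induction l with
  | zero => omega
  | succ l ih =>
    rcases Nat.eq_or_lt_of_le hl with h1 | h1
    · -- l + 1 = 1
      have : l = 0 := by omega
      subst this
      rw [show (0:ℕ) + 1 + 1 = 2 from rfl, Finset.sum_range_succ, Finset.sum_range_one]
      simp [qbinom_zero, qbinom_self]
    · have hl1 : 1 ≤ l := by omega
      have step : ∑ r ∈ range (l + 1 + 1),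
            (-1 : RatFunc ℂ) ^ r * qq ^ (r * (l + 1 - 1)) * qbinom (l+1) r
          = (1 - qq ^ (2 * l)) *
            ∑ r ∈ range (l + 1), (-1 : RatFunc ℂ) ^ r * qq ^ (r * (l - 1)) * qbinom l r := by
        rw [Finset.sum_range_succ' (fun r => (-1 : RatFunc ℂ) ^ r * qq ^ (r * (l + 1 - 1)) * qbinom (l+1) r)]
        simp only [Nat.add_sub_cancel, zero_mul, pow_zero, qbinom_zero, one_mul, mul_one]
        have hterm : ∀ i ∈ range (l + 1),
            (-1 : RatFunc ℂ) ^ (i+1) * qq ^ ((i+1) * l) * qbinom (l+1) (i+1)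
            = (-(qq ^ (2*l))) * ((-1 : RatFunc ℂ) ^ i * qq ^ (i * (l-1)) * qbinom l i)
              + (-1 : RatFunc ℂ) ^ (i+1) * qq ^ ((i+1) * (l-1)) * qbinom l (i+1) := by
          intro i hi
          have hi' : i ≤ l := by have := Finset.mem_range.mp hi; omega
          rw [qpascal l i hi']
          have h3 : i * (l-1) + i = i * l := by
            rw [← Nat.mul_succ, Nat.succ_eq_add_one, Nat.sub_add_cancel hl1]
          have h4 : (i+1) * (l-1) + (i+1) = (i+1) * l := by
            rw [← Nat.mul_succ, Nat.succ_eq_add_one, Nat.sub_add_cancel hl1]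
          have pa : qq ^ ((i+1) * l) * qq ^ (l - i) = qq ^ (2*l) * qq ^ (i * (l-1)) := by
            rw [← pow_add, ← pow_add]
            congr 1
            have h2 : (i+1)*l = i*l + l := by ring
            omega
          have pb : qq ^ ((i+1) * l) * qq⁻¹ ^ (i+1) = qq ^ ((i+1) * (l-1)) := by
            rw [← h4]; exact qq_pow_mul_inv_pow _ _
          linear_combination ((-1 : RatFunc ℂ)^(i+1) * qbinom l i) * pa
            + ((-1 : RatFunc ℂ)^(i+1) * qbinom l (i+1)) * pb
        rw [Finset.sum_congr rfl hterm, Finset.sum_add_distrib, ← Finset.mul_sum]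
        have hS : ∑ i ∈ range (l+1),
            (-1 : RatFunc ℂ) ^ (i+1) * qq ^ ((i+1) * (l-1)) * qbinom l (i+1)
            = (∑ r ∈ range (l + 1), (-1 : RatFunc ℂ) ^ r * qq ^ (r * (l - 1)) * qbinom l r) - 1 := by
          rw [Finset.sum_range_succ, qbinom_of_gt (by omega), Finset.sum_range_succ'
            (fun r => (-1 : RatFunc ℂ) ^ r * qq ^ (r * (l - 1)) * qbinom l r)]
          simp only [zero_mul, pow_zero, qbinom_zero, one_mul, mul_one, mul_zero]
          ring
        rw [hS]
        ring
      rw [step, ih hl1, mul_zero]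

lemma qSid (l : ℕ) (hl : 1 ≤ l) :
    ∑ r ∈ Icc 1 l, (-1 : RatFunc ℂ) ^ (r+1) * qq ^ (r * (l - 1)) * qbinom l r = 1 := by
  have h := qSsum l hl
  rw [Finset.sum_range_succ' (fun r => (-1 : RatFunc ℂ) ^ r * qq ^ (r * (l - 1)) * qbinom l r)] at h
  simp only [zero_mul, pow_zero, qbinom_zero, one_mul, mul_one] at h
  have : ∑ r ∈ Icc 1 l, (-1 : RatFunc ℂ) ^ (r+1) * qq ^ (r * (l - 1)) * qbinom l r
      = ∑ i ∈ range l, (-1 : RatFunc ℂ) ^ (i+1+1) * qq ^ ((i+1) * (l - 1)) * qbinom l (i+1) := by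
    apply Finset.sum_nbij' (i := fun r => r - 1) (j := fun i => i + 1)
    · intro a ha; simp only [Finset.mem_Icc] at ha; simp only [Finset.mem_range]; omega
    · intro a ha; simp only [Finset.mem_range] at ha; simp only [Finset.mem_Icc]; omega
    · intro a ha; simp only [Finset.mem_Icc] at ha; omega
    · intro a ha; simp only [Finset.mem_range] at ha; omega
    · intro a ha; simp only [Finset.mem_Icc] at ha
      rw [show a - 1 + 1 = a by omega]
  rw [this]
  have : ∀ i ∈ range l, (-1 : RatFunc ℂ) ^ (i+1+1) * qq ^ ((i+1) * (l - 1)) * qbinom l (i+1)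
      = -((-1 : RatFunc ℂ) ^ (i+1) * qq ^ ((i+1) * (l - 1)) * qbinom l (i+1)) := by
    intro i _; ring
  rw [Finset.sum_congr rfl this, Finset.sum_neg_distrib]
  linear_combination -h

/-- The coefficients `c_{m_k,…,m_1}(q)` defined by the paper's recursion
(`m i` is the entry `m_i`; the empty coefficient is `1`). -/
noncomputable def cC (m : ℕ → ℕ) : ℕ → RatFunc ℂ
  | 0 => 1
  | k + 1 =>
      qq ^ ((k + 1) * k * m (k + 1)) *
        ∑ j ∈ (Finset.range (k + 1)).attach,
          (-1 : RatFunc ℂ) ^ (k + 1 + j.1 + 1) * qbinom (k + 1) j.1 *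
            qq ^ ((k + 1 - j.1) * k) * qq⁻¹ ^ (j.1 * (j.1 - 1) * m (k + 1)) *
            (if m (j.1 + 1) = m (k + 1) then cC m j.1 else 0)
  termination_by k => k
  decreasing_by exact Finset.mem_range.mp j.2

def isLaurent (x : RatFunc ℂ) : Prop :=
  ∃ (p : Polynomial ℤ) (t : ℕ), x = qq⁻¹ ^ t * Polynomial.aeval qq p

lemma qq_inv_pow_mul_pow (x y : ℕ) : qq⁻¹ ^ (x + y) * qq ^ y = qq⁻¹ ^ x := by
  rw [pow_add, mul_assoc, ← mul_pow, inv_mul_cancel₀ qq_ne_zero, one_pow, mul_one]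

lemma isLaurent_shift (p : Polynomial ℤ) (t s : ℕ) :
    qq⁻¹ ^ t * Polynomial.aeval qq p = qq⁻¹ ^ (t + s) * Polynomial.aeval qq (Polynomial.X ^ s * p) := by
  rw [map_mul, map_pow, Polynomial.aeval_X, ← mul_assoc, qq_inv_pow_mul_pow t s]

lemma isLaurent_one : isLaurent 1 := ⟨1, 0, by simp⟩

lemma isLaurent_zero : isLaurent 0 := ⟨0, 0, by simp⟩

lemma isLaurent_mul {x y : RatFunc ℂ} (hx : isLaurent x) (hy : isLaurent y) :
    isLaurent (x * y) := by
  obtain ⟨p, t, rfl⟩ := hx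
  obtain ⟨r, s, rfl⟩ := hy
  exact ⟨p * r, t + s, by rw [map_mul, pow_add]; ring⟩

lemma isLaurent_add {x y : RatFunc ℂ} (hx : isLaurent x) (hy : isLaurent y) :
    isLaurent (x + y) := by
  obtain ⟨p, t, rfl⟩ := hx
  obtain ⟨r, s, rfl⟩ := hy
  refine ⟨Polynomial.X ^ s * p + Polynomial.X ^ t * r, t + s, ?_⟩
  rw [map_add, mul_add, ← isLaurent_shift, add_comm t s, ← isLaurent_shift]

lemma isLaurent_qq_pow (s : ℕ) : isLaurent (qq ^ s) :=
  ⟨Polynomial.X ^ s, 0, by simp⟩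

lemma isLaurent_qq_inv_pow (s : ℕ) : isLaurent (qq⁻¹ ^ s) := ⟨1, s, by simp⟩

lemma isLaurent_neg_one_pow (s : ℕ) : isLaurent ((-1 : RatFunc ℂ) ^ s) :=
  ⟨(-1) ^ s, 0, by simp⟩

lemma isLaurent_sum {α : Type*} (s : Finset α) (f : α → RatFunc ℂ)
    (h : ∀ a ∈ s, isLaurent (f a)) : isLaurent (∑ a ∈ s, f a) := by
  induction s using Finset.cons_induction with
  | empty => simpa using isLaurent_zero
  | cons a s ha ih =>
    rw [Finset.sum_cons]
    exact isLaurent_add (h a (Finset.mem_cons_self a s))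
      (ih fun b hb => h b (Finset.mem_cons_of_mem hb))

lemma isLaurent_qbinom (n r : ℕ) : isLaurent (qbinom n r) := by
  induction n generalizing r with
  | zero =>
    rcases Nat.eq_zero_or_pos r with rfl | hr
    · rw [qbinom_zero]; exact isLaurent_one
    · rw [qbinom_of_gt hr]; exact isLaurent_zero
  | succ n ih =>
    match r with
    | 0 => rw [qbinom_zero]; exact isLaurent_one
    | i + 1 =>
      rcases le_or_gt (i + 1) (n + 1) with h | h
      · rw [qpascal n i (by omega)]
        exact isLaurent_add (isLaurent_mul (isLaurent_qq_pow _) (ih i))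
          (isLaurent_mul (isLaurent_qq_inv_pow _) (ih (i+1)))
      · rw [qbinom_of_gt h]; exact isLaurent_zero

lemma isLaurent_cC (m : ℕ → ℕ) (n : ℕ) : isLaurent (cC m n) := by
  induction n using Nat.strong_induction_on with
  | _ n ih =>
    match n with
    | 0 => rw [show cC m 0 = 1 from by rw [cC]]; exact isLaurent_one
    | k + 1 =>
      rw [cC]
      apply isLaurent_mul (isLaurent_qq_pow _)
      apply isLaurent_sum
      intro j hj
      apply isLaurent_mul
      apply isLaurent_mul
      apply isLaurent_mul
      apply isLaurent_mul
      · exact isLaurent_neg_one_pow _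
      · exact isLaurent_qbinom _ _
      · exact isLaurent_qq_pow _
      · exact isLaurent_qq_inv_pow _
      · split
        · exact ih j.1 (Finset.mem_range.mp j.2)
        · exact isLaurent_zero

/-- Multiplicity of the value `v` among `m 1, …, m n`. -/
def mult (m : ℕ → ℕ) (n v : ℕ) : ℕ := ((Finset.Icc 1 n).filter (fun i => m i = v)).card

/-- The set of distinct values of `m 1, …, m n`. -/
def vals (m : ℕ → ℕ) (n : ℕ) : Finset ℕ := (Finset.Icc 1 n).image m


lemma two_dvd_mul_pred (x : ℕ) : 2 ∣ x * (x - 1) := by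
  cases x with
  | zero => simp
  | succ k =>
    have : Even ((k+1) * k) := by
      rcases Nat.even_or_odd k with h | h
      · exact h.mul_left _
      · exact (Odd.add_one h).mul_right _
    simpa using this.two_dvd

lemma gauss (n : ℕ) : ∑ i ∈ Icc 1 n, 2 * (i - 1) = n * (n - 1) := by
  induction n with
  | zero => simp
  | succ n ih =>
    rw [Finset.sum_Icc_succ_top (by omega), ih]
    cases n with
    | zero => simp
    | succ k => simp only [Nat.add_sub_cancel]; ring

lemma sum_mul_pred_le {α : Type*} [DecidableEq α] (s : Finset α) (f : α → ℕ) :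
    ∑ v ∈ s, f v * (f v - 1) ≤ (∑ v ∈ s, f v) * ((∑ v ∈ s, f v) - 1) := by
  induction s using Finset.cons_induction with
  | empty => simp
  | cons a s ha ih =>
    rw [Finset.sum_cons, Finset.sum_cons]
    set y := f a
    set S := ∑ v ∈ s, f v
    have key : S * (S - 1) + y * (y - 1) ≤ (y + S) * (y + S - 1) := by
      cases y with
      | zero => simpa using le_refl _
      | succ y' =>
        cases S with
        | zero => simp [Nat.mul_comm]
        | succ S' =>
          have h1 : (S' + 1) * S' + (y' + 1) * y' ≤ (y' + 1 + (S' + 1)) * (y' + 1 + S') := by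
            nlinarith
          simpa [Nat.succ_sub_one, Nat.add_sub_cancel] using h1
    omega

/-- The key structural fact for a weakly decreasing sequence. -/
lemma mult_last_key (m : ℕ → ℕ) (hmono : ∀ i j : ℕ, 1 ≤ i → i ≤ j → m j ≤ m i)
    (N : ℕ) (hN : 1 ≤ N) :
    1 ≤ mult m N (m N) ∧ mult m N (m N) ≤ N ∧
      ∀ i, 1 ≤ i → i ≤ N → (m i = m N ↔ N - mult m N (m N) + 1 ≤ i) := by
  classical
  set s := (Icc 1 N).filter (fun i => m i = m N) with hs
  have hNs : N ∈ s := by simp [hs, hN]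
  have hne : s.Nonempty := ⟨N, hNs⟩
  set c := s.min' hne with hc
  have hcs : c ∈ s := s.min'_mem hne
  have hcb : 1 ≤ c ∧ c ≤ N ∧ m c = m N := by
    have := hcs
    rw [hs, Finset.mem_filter, Finset.mem_Icc] at this
    tauto
  have hup : ∀ i, c ≤ i → i ≤ N → m i = m N := by
    intro i h1 h2
    have ha : m i ≤ m c := hmono c i hcb.1 h1
    have hb : m N ≤ m i := hmono i N (le_trans hcb.1 h1) h2
    omega
  have hseq : s = Icc c N := by
    ext i
    rw [hs, Finset.mem_filter, Finset.mem_Icc, Finset.mem_Icc]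
    constructor
    · intro ⟨⟨h1, h2⟩, h3⟩
      refine ⟨s.min'_le i ?_, h2⟩
      rw [hs, Finset.mem_filter, Finset.mem_Icc]; exact ⟨⟨h1, h2⟩, h3⟩
    · intro ⟨h1, h2⟩
      exact ⟨⟨le_trans hcb.1 h1, h2⟩, hup i h1 h2⟩
  have hcard : mult m N (m N) = N + 1 - c := by
    rw [mult, ← hs, hseq, Nat.card_Icc]
  refine ⟨by omega, by omega, ?_⟩
  intro i h1 h2
  constructor
  · intro h3
    have : i ∈ s := by rw [hs, Finset.mem_filter, Finset.mem_Icc]; exact ⟨⟨h1, h2⟩, h3⟩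
    have := s.min'_le i this
    omega
  · intro h3
    exact hup i (by omega) h2

section withkey
variable (m : ℕ → ℕ) (N a l : ℕ) (hal : a + l = N) (hl : 1 ≤ l)
  (key : ∀ i, 1 ≤ i → i ≤ N → (m i = m N ↔ a + 1 ≤ i))

include hal hl key

lemma Hfilter : ∀ j, a ≤ j → j ≤ N →
    (Icc 1 j).filter (fun i => m i = m N) = Icc (a+1) j := by
  intro j hj1 hj2
  ext i
  rw [Finset.mem_filter, Finset.mem_Icc, Finset.mem_Icc]
  constructor
  · intro ⟨⟨h1, h2⟩, h3⟩
    exact ⟨(key i h1 (le_trans h2 hj2)).mp h3, h2⟩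
  · intro ⟨h1, h2⟩
    exact ⟨⟨by omega, h2⟩, (key i (by omega) (le_trans h2 hj2)).mpr h1⟩

lemma HmultN : ∀ j, a ≤ j → j ≤ N → mult m j (m N) = j - a := by
  intro j hj1 hj2
  rw [mult, Hfilter m N a l hal hl key j hj1 hj2, Nat.card_Icc]
  omega

lemma Hmultv : ∀ v, v ≠ m N → ∀ j, a ≤ j → j ≤ N → mult m j v = mult m N v := by
  intro v hv j hj1 hj2
  rw [mult, mult]
  congr 1
  ext i
  rw [Finset.mem_filter, Finset.mem_Icc, Finset.mem_filter, Finset.mem_Icc]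
  constructor
  · intro ⟨⟨h1, h2⟩, h3⟩
    exact ⟨⟨h1, le_trans h2 hj2⟩, h3⟩
  · intro ⟨⟨h1, h2⟩, h3⟩
    refine ⟨⟨h1, ?_⟩, h3⟩
    by_contra hij
    have hia : ¬ (a + 1 ≤ i) := fun hc => hv (h3 ▸ (key i h1 h2).mpr hc ▸ rfl)
    omega

lemma HmemN (hN : 1 ≤ N) : m N ∈ vals m N := by
  rw [vals, Finset.mem_image]
  exact ⟨N, by simp [hN], rfl⟩

lemma Hvals : ∀ j, a < j → j ≤ N → vals m j = vals m N := by
  intro j hj1 hj2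
  ext v
  rw [vals, vals, Finset.mem_image, Finset.mem_image]
  constructor
  · intro ⟨i, hi, hv⟩
    rw [Finset.mem_Icc] at hi
    exact ⟨i, by rw [Finset.mem_Icc]; omega, hv⟩
  · intro ⟨i, hi, hv⟩
    rw [Finset.mem_Icc] at hi
    by_cases hc : m i = m N
    · refine ⟨j, by rw [Finset.mem_Icc]; omega, ?_⟩
      rw [(key j (by omega) hj2).mpr (by omega), ← hc, hv]
    · have : ¬ (a + 1 ≤ i) := fun hc2 => hc ((key i hi.1 hi.2).mpr hc2)
      exact ⟨i, by rw [Finset.mem_Icc]; omega, hv⟩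

lemma HvalsA : vals m a = (vals m N).erase (m N) := by
  ext v
  rw [Finset.mem_erase, vals, vals, Finset.mem_image, Finset.mem_image]
  constructor
  · intro ⟨i, hi, hv⟩
    rw [Finset.mem_Icc] at hi
    have hne : v ≠ m N := by
      intro h
      have := (key i hi.1 (by omega)).mp (by rw [hv, h])
      omega
    exact ⟨hne, i, by rw [Finset.mem_Icc]; omega, hv⟩
  · intro ⟨hne, i, hi, hv⟩
    rw [Finset.mem_Icc] at hi
    have : ¬ (a + 1 ≤ i) := by
      intro hc
      exact hne (by rw [← hv, (key i hi.1 hi.2).mpr hc])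
    exact ⟨i, by rw [Finset.mem_Icc]; omega, hv⟩

lemma Hsum {M : Type*} [AddCommMonoid M] (F : ℕ → M) (hF0 : F 0 = 0) :
    ∀ j, a ≤ j → j ≤ N → ∑ v ∈ vals m j, F (mult m j v)
      = (∑ v ∈ (vals m N).erase (m N), F (mult m N v)) + F (j - a) := by
  intro j hj1 hj2
  rcases eq_or_lt_of_le hj1 with rfl | hj
  · rw [Nat.sub_self, hF0, add_zero, HvalsA m N a l hal hl key]
    apply Finset.sum_congr rfl
    intro v hv
    rw [Hmultv m N a l hal hl key v (Finset.mem_erase.mp hv).1 a (le_refl a) hj2]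
  · rw [Hvals m N a l hal hl key j hj hj2,
      ← Finset.add_sum_erase _ _ (HmemN m N a l hal hl key (by omega)),
      HmultN m N a l hal hl key j hj1 hj2, add_comm]
    congr 1
    apply Finset.sum_congr rfl
    intro v hv
    rw [Hmultv m N a l hal hl key v (Finset.mem_erase.mp hv).1 j hj1 hj2]

lemma Hprod {M : Type*} [CommMonoid M] (F : ℕ → M) (hF0 : F 0 = 1) :
    ∀ j, a ≤ j → j ≤ N → ∏ v ∈ vals m j, F (mult m j v)
      = (∏ v ∈ (vals m N).erase (m N), F (mult m N v)) * F (j - a) := by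
  intro j hj1 hj2
  rcases eq_or_lt_of_le hj1 with rfl | hj
  · rw [Nat.sub_self, hF0, mul_one, HvalsA m N a l hal hl key]
    apply Finset.prod_congr rfl
    intro v hv
    rw [Hmultv m N a l hal hl key v (Finset.mem_erase.mp hv).1 a (le_refl a) hj2]
  · rw [Hvals m N a l hal hl key j hj hj2,
      ← Finset.mul_prod_erase _ _ (HmemN m N a l hal hl key (by omega)),
      HmultN m N a l hal hl key j hj1 hj2, mul_comm]
    congr 1
    apply Finset.prod_congr rfl
    intro v hv
    rw [Hmultv m N a l hal hl key v (Finset.mem_erase.mp hv).1 j hj1 hj2]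

lemma HA : ∀ j, a ≤ j → j ≤ N →
    (∑ i ∈ Icc 1 N, 2 * (i - 1) * m i) + j * (j - 1) * m N
      = (∑ i ∈ Icc 1 j, 2 * (i - 1) * m i) + N * (N - 1) * m N := by
  intro j hj1 hj2
  have hsplit : ∀ (f : ℕ → ℕ), (∑ i ∈ Icc 1 j, f i) + (∑ i ∈ Icc (j+1) N, f i)
      = ∑ i ∈ Icc 1 N, f i := by
    intro f
    rw [show Icc 1 j = Ioc 0 j from Finset.Icc_add_one_left_eq_Ioc 0 j,
      show Icc (j+1) N = Ioc j N from Finset.Icc_add_one_left_eq_Ioc j N,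
      show Icc 1 N = Ioc 0 N from Finset.Icc_add_one_left_eq_Ioc 0 N]
    exact Finset.sum_Ioc_consecutive _ (by omega) hj2
  have htail : ∑ i ∈ Icc (j+1) N, 2 * (i - 1) * m i
      = (∑ i ∈ Icc (j+1) N, 2 * (i - 1)) * m N := by
    rw [Finset.sum_mul]
    apply Finset.sum_congr rfl
    intro i hi
    rw [Finset.mem_Icc] at hi
    rw [(key i (by omega) hi.2).mpr (by omega)]
  have hg : (∑ i ∈ Icc 1 j, 2 * (i - 1)) + (∑ i ∈ Icc (j+1) N, 2 * (i - 1))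
      = N * (N - 1) := by rw [hsplit, gauss]
  have hgj : (∑ i ∈ Icc 1 j, 2 * (i - 1)) = j * (j - 1) := gauss j
  have hs2 := hsplit (fun i => 2 * (i - 1) * m i)
  have hmul : (j * (j-1) + (∑ i ∈ Icc (j+1) N, 2 * (i - 1))) * m N
      = N * (N - 1) * m N := by rw [show j * (j-1) + (∑ i ∈ Icc (j+1) N, 2 * (i - 1)) = N * (N-1) by omega]
  have hexp : (j * (j-1) + (∑ i ∈ Icc (j+1) N, 2 * (i - 1))) * m N
      = j * (j-1) * m N + (∑ i ∈ Icc (j+1) N, 2 * (i - 1)) * m N := Nat.add_mul _ _ _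
  omega

omit hal hl key in
lemma K1 : ∀ j, ∑ v ∈ vals m j, mult m j v = j := by
  intro j
  have := Finset.card_eq_sum_card_image m (Icc 1 j)
  rw [Nat.card_Icc] at this
  simp only [vals, mult]
  omega

omit hal hl key in
lemma Hineq : ∀ j, ∑ v ∈ vals m j, mult m j v * (mult m j v - 1) ≤ j * (j - 1) := by
  intro j
  have h := sum_mul_pred_le (vals m j) (mult m j)
  rw [K1 m] at h
  exact h

omit hal hl key in
lemma Hdvd : ∀ j, 2 ∣ ∑ v ∈ vals m j, mult m j v * (mult m j v - 1) := by
  intro j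
  exact Finset.dvd_sum fun v _ => two_dvd_mul_pred _

end withkey


lemma mulpred (x : ℕ) : x * (x - 1) + x = x * x := by
  cases x with
  | zero => rfl
  | succ y => simp only [Nat.add_sub_cancel]; ring

lemma mulpred2 (x y : ℕ) (hy : 1 ≤ y) : x * (y - 1) + x = x * y := by
  rw [← Nat.mul_succ, Nat.succ_eq_add_one, Nat.sub_add_cancel hy]

lemma exponent_id (N k j r l a u v AN Aj SSN SSj S' mN : ℕ)
    (hk : k + 1 = N) (hjr : j + r = N) (hal : a + l = N) (hr1 : 1 ≤ r) (hrl : r ≤ l)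
    (hHA : AN + j * (j - 1) * mN = Aj + N * (N - 1) * mN)
    (hSSN : SSN = S' + l * (l - 1)) (hSSj : SSj = S' + (l - r) * ((l - r) - 1))
    (hu : j * (j - 1) - SSj = 2 * u) (hv : N * (N - 1) - SSN = 2 * v)
    (hiu : SSj ≤ j * (j - 1)) (hiv : SSN ≤ N * (N - 1)) :
    N * k * mN + r * k + (Aj + u) = AN + v + (r * (l - 1) + j * (j - 1) * mN) := by
  have hm1 : N * (N - 1) + N = N * N := mulpred N
  have hm2 : j * (j - 1) + j = j * j := mulpred j
  have hm3 : l * (l - 1) + l = l * l := mulpred l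
  have hm4 : (l - r) * ((l - r) - 1) + (l - r) = (l - r) * (l - r) := mulpred (l - r)
  have hm5 : r * k + r = r * N := by rw [← hk]; ring
  have hm6 : r * (l - 1) + r = r * l := mulpred2 r l (by omega)
  have he1 : N * N = j * j + 2 * (j * r) + r * r := by rw [← hjr]; ring
  have he2 : r * N = r * j + r * r := by rw [← hjr]; ring
  have he2' : j * r = r * j := by ring
  have he3 : r * N = r * a + r * l := by rw [← hal]; ring
  have hlr : l - r + r = l := by omega
  have he4 : l * l = (l - r) * (l - r) + 2 * ((l - r) * r) + r * r := by
    have h : ∀ d L : ℕ, d + r = L → L * L = d * d + 2 * (d * r) + r * r := by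
      rintro d L rfl; ring
    exact h (l - r) l hlr
  have he5 : r * l = (l - r) * r + r * r := by
    have h : ∀ d L : ℕ, d + r = L → r * L = d * r + r * r := by
      rintro d L rfl; ring
    exact h (l - r) l hlr
  have hm7 : N * (N - 1) = N * k := by rw [← hk]; simp
  have hm8 : N * (N - 1) * mN = N * k * mN := by rw [hm7]
  omega


/-- The closed-form coefficient of Lemma 9:
`([n]!/([l₁]!⋯[l_j]!)) · q^{∑ 2(i-1)mᵢ + (n(n-1) - ∑ lᵢ(lᵢ-1))/2}`,
where the `lᵢ` are the multiplicities of the distinct values of the tuple. -/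
noncomputable def cF (m : ℕ → ℕ) (n : ℕ) : RatFunc ℂ :=
  (qfact n / ∏ v ∈ vals m n, qfact (mult m n v)) *
    qq ^ (∑ i ∈ Finset.Icc 1 n, 2 * (i - 1) * m i +
      (n * (n - 1) - ∑ v ∈ vals m n, mult m n v * (mult m n v - 1)) / 2)


noncomputable def Fterm (m : ℕ → ℕ) (N k : ℕ) (j : ℕ) : RatFunc ℂ :=
  qq ^ (N * k * m N) *
    ((-1 : RatFunc ℂ) ^ (N + j + 1) * qbinom N j * qq ^ ((N - j) * k) *
      qq⁻¹ ^ (j * (j - 1) * m N) * (if m (j + 1) = m N then cC m j else 0))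

theorem cC_eq_cF (m : ℕ → ℕ) (hmono : ∀ i j : ℕ, 1 ≤ i → i ≤ j → m j ≤ m i) (n : ℕ) :
    cC m n = cF m n := by
  induction n using Nat.strong_induction_on with
  | _ n ih =>
    match n with
    | 0 =>
      rw [show cC m 0 = 1 by rw [cC], cF]
      simp [vals, qfact]
    | k + 1 =>
      rw [cC, Finset.sum_attach (range (k+1)) (fun j => (-1 : RatFunc ℂ) ^ (k + 1 + j + 1) *
        qbinom (k + 1) j * qq ^ ((k + 1 - j) * k) * qq⁻¹ ^ (j * (j - 1) * m (k + 1)) *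
        (if m (j + 1) = m (k + 1) then cC m j else 0)), Finset.mul_sum]
      show (∑ j ∈ range (k+1), Fterm m (k+1) k j) = cF m (k+1)
      set N := k + 1 with hNdef
      have hkN : k + 1 = N := rfl
      have hN : 1 ≤ N := by omega
      obtain ⟨hl1, hlN, key0⟩ := mult_last_key m hmono N hN
      set l := mult m N (m N) with hldef
      set a := N - l with hadef
      have hal : a + l = N := by omega
      have key : ∀ i, 1 ≤ i → i ≤ N → (m i = m N ↔ a + 1 ≤ i) := key0
      set P := ∏ v ∈ (vals m N).erase (m N), qfact (mult m N v) with hPdef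
      set S' := ∑ v ∈ (vals m N).erase (m N), mult m N v * (mult m N v - 1) with hSdef
      have hP : P ≠ 0 := by
        rw [hPdef]
        exact Finset.prod_ne_zero_iff.mpr fun v _ => qfact_ne_zero _
      -- step 1: restrict the sum
      have step1 : (∑ j ∈ range N, Fterm m N k j) = ∑ j ∈ Icc a (N-1), Fterm m N k j := by
        symm
        apply Finset.sum_subset
        · intro x hx
          rw [Finset.mem_Icc] at hx
          rw [Finset.mem_range]
          omega
        · intro x hx hx2
          rw [Finset.mem_range] at hx
          rw [Finset.mem_Icc] at hx2
          have hxa : x < a := by omega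
          have hcond : ¬ (m (x + 1) = m N) := by
            intro hc
            have := (key (x+1) (by omega) (by omega)).mp hc
            omega
          rw [Fterm, if_neg hcond, mul_zero, mul_zero]
      -- step 2: reindex
      have step2 : (∑ j ∈ Icc a (N-1), Fterm m N k j) = ∑ r ∈ Icc 1 l, Fterm m N k (N - r) := by
        apply Finset.sum_nbij' (i := fun j => N - j) (j := fun r => N - r)
        · intro x hx; rw [Finset.mem_Icc] at hx ⊢; omega
        · intro x hx; rw [Finset.mem_Icc] at hx ⊢; omega
        · intro x hx; rw [Finset.mem_Icc] at hx; omega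
        · intro x hx; rw [Finset.mem_Icc] at hx; omega
        · intro x hx; rw [Finset.mem_Icc] at hx
          rw [show N - (N - x) = x by omega]
      -- per-term formula
      have step3 : ∀ r ∈ Icc 1 l, Fterm m N k (N - r)
          = ((qfact N / (P * qfact l)) * qq ^ ((∑ i ∈ Icc 1 N, 2 * (i - 1) * m i) +
              (N * (N - 1) - ∑ v ∈ vals m N, mult m N v * (mult m N v - 1)) / 2)) *
            ((-1 : RatFunc ℂ) ^ (r+1) * qq ^ (r * (l - 1)) * qbinom l r) := by
        intro r hr
        rw [Finset.mem_Icc] at hr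
        set j := N - r with hjdef
        have hjr : j + r = N := by omega
        have haj : a ≤ j := by omega
        have hjN : j ≤ N := by omega
        have hcond : m (j + 1) = m N := (key (j+1) (by omega) (by omega)).mpr (by omega)
        rw [Fterm, if_pos hcond, ih j (by omega), cF]
        have hprodj : ∏ v ∈ vals m j, qfact (mult m j v) = P * qfact (l - r) := by
          have := Hprod m N a l hal hl1 key qfact rfl j haj hjN
          rw [this, show j - a = l - r by omega]
        have hSSj : (∑ v ∈ vals m j, mult m j v * (mult m j v - 1))
            = S' + (l - r) * ((l - r) - 1) := by
          have := Hsum m N a l hal hl1 key (fun x => x * (x - 1)) rfl j haj hjN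
          rw [this, show j - a = l - r by omega]
        have hSSN : (∑ v ∈ vals m N, mult m N v * (mult m N v - 1))
            = S' + l * (l - 1) := by
          have := Hsum m N a l hal hl1 key (fun x => x * (x - 1)) rfl N (by omega) (le_refl N)
          rw [this, show N - a = l by omega]
        have hHA := HA m N a l hal hl1 key j haj hjN
        have hiu : S' + (l - r) * ((l - r) - 1) ≤ j * (j - 1) := hSSj ▸ Hineq m j
        have hiv : S' + l * (l - 1) ≤ N * (N - 1) := hSSN ▸ Hineq m N
        obtain ⟨u, hu⟩ : ∃ u, j * (j - 1) - (S' + (l - r) * ((l - r) - 1)) = 2 * u :=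
          Nat.dvd_sub (two_dvd_mul_pred j) (hSSj ▸ Hdvd m j)
        obtain ⟨v, hv⟩ : ∃ v, N * (N - 1) - (S' + l * (l - 1)) = 2 * v :=
          Nat.dvd_sub (two_dvd_mul_pred N) (hSSN ▸ Hdvd m N)
        have hexp := exponent_id N k j r l a u v
          (∑ i ∈ Icc 1 N, 2 * (i - 1) * m i) (∑ i ∈ Icc 1 j, 2 * (i - 1) * m i)
          (S' + l * (l - 1)) (S' + (l - r) * ((l - r) - 1)) S' (m N)
          hkN hjr hal hr.1 hr.2 (hHA) rfl rfl hu hv hiu hiv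
        rw [hprodj, hSSj, hSSN, hu, hv,
          Nat.mul_div_cancel_left u (by norm_num), Nat.mul_div_cancel_left v (by norm_num),
          qbinom_eq hjN, show N - j = r by omega, qbinom_eq hr.2,
          show (-1 : RatFunc ℂ) ^ (N + j + 1) = (-1) ^ (r+1) by
            rw [show N + j + 1 = 2*j + (r+1) by omega, pow_add, pow_mul]; norm_num]
        have hqpow : qq ^ (N * k * m N) * qq ^ (r * k) *
              qq ^ ((∑ i ∈ Icc 1 j, 2 * (i - 1) * m i) + u)
            = qq ^ ((∑ i ∈ Icc 1 N, 2 * (i - 1) * m i) + v) * qq ^ (r * (l - 1)) *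
              qq ^ (j * (j - 1) * m N) := by
          rw [← pow_add, ← pow_add, ← pow_add, ← pow_add]
          congr 1
          omega
        have hfr := qfact_ne_zero r
        have hfj := qfact_ne_zero j
        have hfl := qfact_ne_zero l
        have hflr := qfact_ne_zero (l - r)
        have hfN := qfact_ne_zero N
        have hqnz : qq ^ (j * (j - 1) * m N) ≠ 0 := pow_ne_zero _ qq_ne_zero
        rw [inv_pow]
        field_simp
        linear_combination hqpow
      -- SS and prod facts at N
      have hprodN : ∏ v ∈ vals m N, qfact (mult m N v) = P * qfact l := by
        have := Hprod m N a l hal hl1 key qfact rfl N (by omega) (le_refl N)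
        rw [this, show N - a = l by omega]
      rw [step1, step2, Finset.sum_congr rfl step3, ← Finset.mul_sum, qSid l hl1, mul_one,
        cF, hprodN]

/-- the recursive coefficients agree with the closed form of Lemma 9,
and in particular lie in `ℤ[q,q⁻¹]`. -/
theorem stmt6 (m : ℕ → ℕ) (n : ℕ) (hn : 1 ≤ n)
    (hmono : ∀ i j : ℕ, 1 ≤ i → i ≤ j → m j ≤ m i) :
    cC m n = cF m n ∧
      ∃ (p : Polynomial ℤ) (t : ℕ), cC m n = qq⁻¹ ^ t * Polynomial.aeval qq p := by
  refine ⟨cC_eq_cF m hmono n, ?_⟩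
  obtain ⟨p, t, h⟩ := isLaurent_cC m n
  exact ⟨p, t, h⟩
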